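/- arXiv:2407.02191 — 3 statements merged into one kernel-verified Lean document; each statement's English description precedes it below -/
import Mathlib

section
/- If (P, Q) is a dominating pair for a mechanism M, i.e., for every ε ∈ ℝ the hockey-stick divergence satisfies sup_{S ≃ S'} D_{e^ε}(M(S) ‖ M(S')) ≤ D_{e^ε}(P ‖ Q), then for every α ∈ [0,1], inf_{S ≃ S'} T(M(S), M(S'))(α) ≥ T(P, Q)(α). -/
open MeasureTheory Real

/-- Hockey-stick divergence `D_γ(P ‖ Q) = sup_E (Q(E) - γ P(E))` over measurable sets. -/
noncomputable def hsDiv {O : Type*} [MeasurableSpace O] (γ : ℝ) (P Q : Measure O) : ℝ :=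
  sSup {x | ∃ E : Set O, MeasurableSet E ∧ x = (Q E).toReal - γ * (P E).toReal}

/-- Trade-off function `T(P,Q)(α) = inf {1 - E_Q[φ] : E_P[φ] ≤ α}` over measurable
tests `φ : O → [0,1]`. -/
noncomputable def tradeoff {O : Type*} [MeasurableSpace O] (P Q : Measure O) (α : ℝ) : ℝ :=
  sInf {β | ∃ φ : O → ℝ, Measurable φ ∧ (∀ o, 0 ≤ φ o) ∧ (∀ o, φ o ≤ 1) ∧
    (∫ o, φ o ∂P) ≤ α ∧ β = 1 - ∫ o, φ o ∂Q}

open scoped ENNReal in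
section
section HS
variable {O : Type*} [MeasurableSpace O] (μ ν : Measure O) [IsFiniteMeasure μ] [IsFiniteMeasure ν]

lemma key (γ : ℝ) {N : Set O} (hN : MeasurableSet N) (hμN : μ N = 0)
    (hsN : ν.singularPart μ Nᶜ = 0) (ψ : O → ℝ≥0∞) (hψ : Measurable ψ) (hψ1 : ∀ x, ψ x ≤ 1) :
    ∫⁻ x, ψ x ∂ν + ENNReal.ofReal γ * μ ({x | ENNReal.ofReal γ < ν.rnDeriv μ x} ∪ N)
      ≤ ENNReal.ofReal γ * ∫⁻ x, ψ x ∂μ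
        + ν ({x | ENNReal.ofReal γ < ν.rnDeriv μ x} ∪ N) := by
  set γe := ENNReal.ofReal γ with hγe
  set g := ν.rnDeriv μ with hg
  have hgm : Measurable g := Measure.measurable_rnDeriv ν μ
  set s := ν.singularPart μ with hs
  set T : Set O := {x | γe < g x} with hT
  have hTmeas : MeasurableSet T := measurableSet_lt measurable_const hgm
  -- singular part bound
  have hsuniv : s Set.univ = s N := by
    rw [← measure_add_measure_compl hN, hsN, add_zero]
  have h1 : ∫⁻ x, ψ x ∂ν = ∫⁻ x, ψ x ∂s + ∫⁻ x, g x * ψ x ∂μ := by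
    conv_lhs => rw [← Measure.singularPart_add_rnDeriv ν μ]
    rw [lintegral_add_measure, lintegral_withDensity_eq_lintegral_mul μ hgm hψ]
    rfl
  have h2 : ∫⁻ x, ψ x ∂s ≤ s (T ∪ N) := by
    calc ∫⁻ x, ψ x ∂s ≤ ∫⁻ _, 1 ∂s := lintegral_mono hψ1
    _ = s Set.univ := by simp
    _ = s N := hsuniv
    _ ≤ s (T ∪ N) := measure_mono Set.subset_union_right
  have h3 : ν (T ∪ N) = s (T ∪ N) + ∫⁻ x in T ∪ N, g x ∂μ := by
    conv_lhs => rw [← Measure.singularPart_add_rnDeriv ν μ]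
    rw [Measure.add_apply, withDensity_apply _ (hTmeas.union hN)]
  have h4 : μ (T ∪ N) = μ T := le_antisymm
    (le_trans (measure_union_le _ _) (by rw [hμN, add_zero]))
    (measure_mono Set.subset_union_left)
  -- core pointwise inequality
  have h5 : ∫⁻ x, g x * ψ x ∂μ + γe * μ T ≤ γe * ∫⁻ x, ψ x ∂μ + ∫⁻ x in T, g x ∂μ := by
    calc ∫⁻ x, g x * ψ x ∂μ + γe * μ T
        = ∫⁻ x, (g x * ψ x + T.indicator (fun _ => γe) x) ∂μ := by
          rw [lintegral_add_left (f := fun x => g x * ψ x) (hgm.mul hψ), lintegral_indicator hTmeas, setLIntegral_const]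
      _ ≤ ∫⁻ x, (γe * ψ x + T.indicator g x) ∂μ := ?_
      _ = γe * ∫⁻ x, ψ x ∂μ + ∫⁻ x in T, g x ∂μ := by
          rw [lintegral_add_left (f := fun x => γe * ψ x) (measurable_const.mul hψ), lintegral_const_mul γe hψ,
            lintegral_indicator hTmeas]
    refine lintegral_mono fun x => ?_
    by_cases hx : x ∈ T
    · rw [Set.indicator_of_mem hx, Set.indicator_of_mem hx]
      have hlt : γe ≤ g x := (hx : γe < g x).le
      have hd : γe + (g x - γe) = g x := add_tsub_cancel_of_le hlt
      calc g x * ψ x + γe = (γe + (g x - γe)) * ψ x + γe := by rw [hd]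
      _ = γe * ψ x + ((g x - γe) * ψ x + γe) := by ring
      _ ≤ γe * ψ x + ((g x - γe) * 1 + γe) := by
          gcongr; exact hψ1 x
      _ = γe * ψ x + g x := by rw [mul_one, add_comm (g x - γe), hd]
    · rw [Set.indicator_of_notMem hx, Set.indicator_of_notMem hx]
      have : g x ≤ γe := not_lt.1 hx
      calc g x * ψ x + 0 ≤ γe * ψ x + 0 := by gcongr
      _ ≤ γe * ψ x + 0 := le_rfl
  calc ∫⁻ x, ψ x ∂ν + γe * μ (T ∪ N)
      = ∫⁻ x, ψ x ∂s + (∫⁻ x, g x * ψ x ∂μ + γe * μ T) := by rw [h1, h4]; ring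
    _ ≤ s (T ∪ N) + (γe * ∫⁻ x, ψ x ∂μ + ∫⁻ x in T, g x ∂μ) := add_le_add h2 h5
    _ ≤ s (T ∪ N) + (γe * ∫⁻ x, ψ x ∂μ + ∫⁻ x in T ∪ N, g x ∂μ) := by
        gcongr; exact Set.subset_union_left
    _ = γe * ∫⁻ x, ψ x ∂μ + ν (T ∪ N) := by rw [h3]; ring
end HS

section HS2
variable {O : Type*} [MeasurableSpace O] (μ ν : Measure O) [IsFiniteMeasure μ] [IsFiniteMeasure ν]

lemma hsDiv_bddAbove (γ : ℝ) (hγ : 0 ≤ γ) :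
    BddAbove {x | ∃ E : Set O, MeasurableSet E ∧ x = (ν E).toReal - γ * (μ E).toReal} := by
  refine ⟨(ν Set.univ).toReal, fun x hx => ?_⟩
  obtain ⟨E, hE, rfl⟩ := hx
  have h1 : (ν E).toReal ≤ (ν Set.univ).toReal :=
    ENNReal.toReal_mono (measure_ne_top _ _) (measure_mono (Set.subset_univ E))
  have h2 : 0 ≤ γ * (μ E).toReal := mul_nonneg hγ ENNReal.toReal_nonneg
  linarith

lemma hsDiv_ge (γ : ℝ) (hγ : 0 ≤ γ) {E : Set O} (hE : MeasurableSet E) :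
    (ν E).toReal - γ * (μ E).toReal ≤ hsDiv γ μ ν :=
  le_csSup (hsDiv_bddAbove μ ν γ hγ) ⟨E, hE, rfl⟩

/-- real-valued version of `key` for indicator tests -/
lemma key_real (γ : ℝ) (hγ : 0 ≤ γ) {N : Set O} (hN : MeasurableSet N) (hμN : μ N = 0)
    (hsN : ν.singularPart μ Nᶜ = 0) {E : Set O} (hE : MeasurableSet E) :
    (ν E).toReal - γ * (μ E).toReal ≤
      (ν ({x | ENNReal.ofReal γ < ν.rnDeriv μ x} ∪ N)).toReal
        - γ * (μ ({x | ENNReal.ofReal γ < ν.rnDeriv μ x} ∪ N)).toReal := by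
  have h := key μ ν γ hN hμN hsN (E.indicator 1) (measurable_one.indicator hE)
    (fun x => Set.indicator_le_self' (fun _ _ => zero_le_one) x)
  rw [lintegral_indicator_one hE, lintegral_indicator_one hE] at h
  set A := {x | ENNReal.ofReal γ < ν.rnDeriv μ x} ∪ N
  have h' := ENNReal.toReal_mono (by finiteness) h
  rw [ENNReal.toReal_add (by finiteness) (by finiteness),
    ENNReal.toReal_add (by finiteness) (by finiteness),
    ENNReal.toReal_mul, ENNReal.toReal_mul, ENNReal.toReal_ofReal hγ] at h'
  linarith

lemma hsDiv_eq (γ : ℝ) (hγ : 0 ≤ γ) {N : Set O} (hN : MeasurableSet N) (hμN : μ N = 0)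
    (hsN : ν.singularPart μ Nᶜ = 0) :
    hsDiv γ μ ν = (ν ({x | ENNReal.ofReal γ < ν.rnDeriv μ x} ∪ N)).toReal
        - γ * (μ ({x | ENNReal.ofReal γ < ν.rnDeriv μ x} ∪ N)).toReal := by
  have hA : MeasurableSet ({x | ENNReal.ofReal γ < ν.rnDeriv μ x} ∪ N) :=
    (measurableSet_lt measurable_const (Measure.measurable_rnDeriv ν μ)).union hN
  refine le_antisymm (csSup_le ⟨_, ∅, MeasurableSet.empty, rfl⟩ ?_) (hsDiv_ge μ ν γ hγ hA)
  rintro x ⟨E, hE, rfl⟩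
  exact key_real μ ν γ hγ hN hμN hsN hE

/-- Bochner/lintegral conversion for tests -/
lemma test_integral_eq (φ : O → ℝ) (hφ : Measurable φ) (h0 : ∀ o, 0 ≤ φ o) :
    ∫ o, φ o ∂μ = (∫⁻ o, ENNReal.ofReal (φ o) ∂μ).toReal :=
  integral_eq_lintegral_of_nonneg_ae (ae_of_all _ h0) hφ.aestronglyMeasurable

lemma test_lintegral_ne_top (φ : O → ℝ) (h1 : ∀ o, φ o ≤ 1) :
    ∫⁻ o, ENNReal.ofReal (φ o) ∂μ ≠ ⊤ := by
  refine ne_top_of_le_ne_top (by finiteness : μ Set.univ ≠ ⊤) ?_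
  calc ∫⁻ o, ENNReal.ofReal (φ o) ∂μ ≤ ∫⁻ _, 1 ∂μ :=
        lintegral_mono fun x => ENNReal.ofReal_le_one.2 (h1 x)
    _ = μ Set.univ := by simp

/-- easy direction -/
lemma easy_bound (γ : ℝ) (hγ : 0 ≤ γ) (φ : O → ℝ) (hφ : Measurable φ)
    (h0 : ∀ o, 0 ≤ φ o) (h1 : ∀ o, φ o ≤ 1) :
    ∫ o, φ o ∂ν ≤ γ * ∫ o, φ o ∂μ + hsDiv γ μ ν := by
  obtain ⟨u, hu, hsu, hμu⟩ := Measure.mutuallySingular_singularPart ν μ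
  -- u : measurable, singularPart u = 0, μ uᶜ = 0
  set N := uᶜ with hNdef
  have hN : MeasurableSet N := hu.compl
  have hμN : μ N = 0 := hμu
  have hsN : ν.singularPart μ Nᶜ = 0 := by rwa [hNdef, compl_compl]
  have h := key μ ν γ hN hμN hsN (fun o => ENNReal.ofReal (φ o))
    (ENNReal.measurable_ofReal.comp hφ) (fun x => ENNReal.ofReal_le_one.2 (h1 x))
  set A := {x | ENNReal.ofReal γ < ν.rnDeriv μ x} ∪ N
  have h' := ENNReal.toReal_mono (by
    have := test_lintegral_ne_top μ φ h1
    finiteness) h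
  rw [ENNReal.toReal_add (test_lintegral_ne_top ν φ h1) (by finiteness),
    ENNReal.toReal_add (by
      have := test_lintegral_ne_top μ φ h1
      finiteness) (by finiteness),
    ENNReal.toReal_mul, ENNReal.toReal_mul, ENNReal.toReal_ofReal hγ] at h'
  rw [test_integral_eq μ φ hφ h0, test_integral_eq ν φ hφ h0]
  have hA : MeasurableSet A :=
    (measurableSet_lt measurable_const (Measure.measurable_rnDeriv ν μ)).union hN
  have := hsDiv_ge μ ν γ hγ hA
  linarith
end HS2

section HS3
variable {O : Type*} [MeasurableSpace O] (μ : Measure O) [IsFiniteMeasure μ]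

lemma meas_lt_le (g : O → ℝ≥0∞) (hg : Measurable g) (α γ₀ : ℝ) (hγ₀ : 0 ≤ γ₀)
    (h : ∀ δ, γ₀ < δ → ∃ γ, γ₀ ≤ γ ∧ γ < δ ∧ (μ {x | ENNReal.ofReal γ < g x}).toReal ≤ α) :
    (μ {x | ENNReal.ofReal γ₀ < g x}).toReal ≤ α := by
  have hα : 0 ≤ α := by
    obtain ⟨γ, -, -, hF⟩ := h (γ₀ + 1) (by linarith)
    exact le_trans ENNReal.toReal_nonneg hF
  set s : ℕ → Set O := fun n => {x | ENNReal.ofReal (γ₀ + 1 / (n + 1)) < g x} with hs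
  have hmono : Monotone s := by
    intro n m hnm
    refine fun x hx => lt_of_le_of_lt (ENNReal.ofReal_le_ofReal ?_) hx
    have h1 : (1 : ℝ) / (m + 1) ≤ 1 / (n + 1) := by
      apply one_div_le_one_div_of_le <;> [positivity; exact_mod_cast by omega]
    linarith
  have hunion : {x | ENNReal.ofReal γ₀ < g x} = ⋃ n, s n := by
    ext x
    simp only [hs, Set.mem_setOf_eq, Set.mem_iUnion]
    constructor
    · intro hx
      rcases eq_or_ne (g x) ⊤ with htop | htop
      · exact ⟨0, htop ▸ ENNReal.ofReal_lt_top⟩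
      · have hx' : γ₀ < (g x).toReal := (ENNReal.ofReal_lt_iff_lt_toReal hγ₀ htop).1 hx
        obtain ⟨n, hn⟩ := exists_nat_one_div_lt (sub_pos.2 hx')
        exact ⟨n, (ENNReal.ofReal_lt_iff_lt_toReal (by positivity) htop).2 (by linarith)⟩
    · rintro ⟨n, hn⟩
      refine lt_of_le_of_lt (ENNReal.ofReal_le_ofReal ?_) hn
      have : (0:ℝ) < 1 / (n + 1) := by positivity
      linarith
  have hsup : μ {x | ENNReal.ofReal γ₀ < g x} = ⨆ n, μ (s n) := by
    rw [hunion]; exact hmono.measure_iUnion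
  refine ENNReal.toReal_le_of_le_ofReal hα ?_
  rw [hsup]
  refine iSup_le fun n => ?_
  obtain ⟨γ, hγl, hγu, hF⟩ := h (γ₀ + 1 / (n + 1))
    (by have : (0:ℝ) < 1 / ((n:ℝ) + 1) := by positivity
        linarith)
  refine le_trans (measure_mono fun x hx => lt_of_le_of_lt (ENNReal.ofReal_le_ofReal hγu.le) hx)
    ((ENNReal.le_ofReal_iff_toReal_le (measure_ne_top _ _) hα).2 hF)

lemma meas_ge_ge (g : O → ℝ≥0∞) (hg : Measurable g) (α γ₀ : ℝ) (hα : 0 ≤ α) (hγ₀ : 0 < γ₀)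
    (h : ∀ γ, 0 < γ → γ < γ₀ → α ≤ (μ {x | ENNReal.ofReal γ < g x}).toReal) :
    α ≤ (μ {x | ENNReal.ofReal γ₀ ≤ g x}).toReal := by
  set c : ℕ → ℝ := fun n => γ₀ - γ₀ / (n + 2) with hc
  have hcpos : ∀ n, 0 < c n := by
    intro n
    have hn : (0:ℝ) ≤ (n:ℝ) := n.cast_nonneg
    have : γ₀ / (n + 2) < γ₀ := div_lt_self hγ₀ (by linarith)
    simpa [hc] using sub_pos.2 this
  have hclt : ∀ n, c n < γ₀ := fun n => sub_lt_self _ (by positivity)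
  have hcmono : Monotone c := by
    intro n m hnm
    have : γ₀ / (m + 2) ≤ γ₀ / (n + 2) := by
      apply div_le_div_of_nonneg_left hγ₀.le <;> [positivity; exact_mod_cast by omega]
    simp only [hc]; linarith
  have hctend : Filter.Tendsto c Filter.atTop (nhds γ₀) := by
    have h1 : Filter.Tendsto (fun n : ℕ => γ₀ / (n + 2)) Filter.atTop (nhds 0) := by
      have := (tendsto_const_div_atTop_nhds_zero_nat γ₀).comp
        (Filter.tendsto_add_atTop_nat 2)
      exact this.congr fun n => by simp only [Function.comp]; push_cast; ring
    simpa using tendsto_const_nhds.sub h1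
  set s : ℕ → Set O := fun n => {x | ENNReal.ofReal (c n) < g x} with hs
  have hanti : Antitone s := by
    intro n m hnm x hx
    exact lt_of_le_of_lt (ENNReal.ofReal_le_ofReal (hcmono hnm)) hx
  have hinter : ⋂ n, s n = {x | ENNReal.ofReal γ₀ ≤ g x} := by
    ext x
    simp only [hs, Set.mem_iInter, Set.mem_setOf_eq]
    constructor
    · intro hx
      refine le_of_tendsto (ENNReal.tendsto_ofReal hctend) ?_
      exact Filter.Eventually.of_forall fun n => (hx n).le
    · intro hx n
      exact lt_of_lt_of_le ((ENNReal.ofReal_lt_ofReal_iff hγ₀).2 (hclt n)) hx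
  have hinf : μ {x | ENNReal.ofReal γ₀ ≤ g x} = ⨅ n, μ (s n) := by
    rw [← hinter]
    exact hanti.measure_iInter
      (fun n => (measurableSet_lt measurable_const hg).nullMeasurableSet)
      ⟨0, measure_ne_top _ _⟩
  have : ENNReal.ofReal α ≤ μ {x | ENNReal.ofReal γ₀ ≤ g x} := by
    rw [hinf]
    exact le_iInf fun n => ENNReal.ofReal_le_of_le_toReal (h (c n) (hcpos n) (hclt n))
  have := ENNReal.toReal_mono (measure_ne_top _ _) this
  rwa [ENNReal.toReal_ofReal hα] at this
end HS3

section HS4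
variable {O : Type*} [MeasurableSpace O] (μ ν : Measure O)
  [IsProbabilityMeasure μ] [IsProbabilityMeasure ν]

lemma union_null_eq {N S : Set O} (hμN : μ N = 0) : μ (S ∪ N) = μ S :=
  le_antisymm (le_trans (measure_union_le _ _) (by rw [hμN, add_zero]))
    (measure_mono Set.subset_union_left)

lemma indicator_test_props (A : Set O) (hA : MeasurableSet A) :
    Measurable (A.indicator fun _ => (1:ℝ)) ∧ (∀ o, 0 ≤ A.indicator (fun _ => (1:ℝ)) o) ∧
      (∀ o, A.indicator (fun _ => (1:ℝ)) o ≤ 1) ∧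
      ∫ o, A.indicator (fun _ => (1:ℝ)) o ∂μ = (μ A).toReal := by
  refine ⟨measurable_const.indicator hA, fun o => Set.indicator_nonneg (fun _ _ => zero_le_one) o,
    fun o => Set.indicator_le' (fun _ _ => le_rfl) (fun _ _ => zero_le_one) o, ?_⟩
  rw [integral_indicator_const (1:ℝ) hA, smul_eq_mul, mul_one, measureReal_def]

lemma exists_good_test (α β : ℝ) (hα : 0 ≤ α) (hβ : 0 ≤ β)
    (h : ∀ γ : ℝ, 0 < γ → 1 - β ≤ γ * α + hsDiv γ μ ν) :
    ∃ φ : O → ℝ, Measurable φ ∧ (∀ o, 0 ≤ φ o) ∧ (∀ o, φ o ≤ 1) ∧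
      (∫ o, φ o ∂μ) ≤ α ∧ 1 - ∫ o, φ o ∂ν ≤ β := by
  obtain ⟨u, hu, hsu, hμu⟩ := Measure.mutuallySingular_singularPart ν μ
  set N := uᶜ with hNdef
  have hN : MeasurableSet N := hu.compl
  have hμN : μ N = 0 := hμu
  have hsN : ν.singularPart μ Nᶜ = 0 := by rwa [hNdef, compl_compl]
  set g := ν.rnDeriv μ with hgdef
  have hgm : Measurable g := Measure.measurable_rnDeriv ν μ
  have hνapply : ∀ E : Set O, MeasurableSet E →
      ν E = ν.singularPart μ E + ∫⁻ x in E, g x ∂μ := by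
    intro E hE
    conv_lhs => rw [← Measure.singularPart_add_rnDeriv ν μ]
    rw [Measure.add_apply, withDensity_apply _ hE]
  have hνN : ν N = ν.singularPart μ N := by
    rw [hνapply N hN, setLIntegral_measure_zero _ _ hμN, add_zero]
  have hsuniv : ν.singularPart μ Set.univ = ν.singularPart μ N := by
    rw [← measure_add_measure_compl hN, hsN, add_zero]
  set T : Set ℝ := {γ | 0 < γ ∧ (μ {x | ENNReal.ofReal γ < g x}).toReal ≤ α} with hT
  by_cases hTne : T.Nonempty
  · set γ₀ := sInf T with hγ₀def
    have hbdd : BddBelow T := ⟨0, fun γ hγ => hγ.1.le⟩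
    have hγ₀nonneg : 0 ≤ γ₀ := le_csInf hTne fun γ hγ => hγ.1.le
    have hF1 : (μ {x | ENNReal.ofReal γ₀ < g x}).toReal ≤ α := by
      refine meas_lt_le μ g hgm α γ₀ hγ₀nonneg fun δ hδ => ?_
      obtain ⟨γ, hγT, hγδ⟩ := exists_lt_of_csInf_lt hTne hδ
      exact ⟨γ, csInf_le hbdd hγT, hγδ, hγT.2⟩
    by_cases hγ₀pos : 0 < γ₀
    · -- main Neyman–Pearson case
      set A : Set O := {x | ENNReal.ofReal γ₀ < g x} ∪ N with hAdef
      set B : Set O := {x | g x = ENNReal.ofReal γ₀} \ N with hBdef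
      have hAm : MeasurableSet A := (measurableSet_lt measurable_const hgm).union hN
      have hBm : MeasurableSet B := (hgm (measurableSet_singleton _)).diff hN
      set PAr := (μ A).toReal with hPAr
      set PBr := (μ B).toReal with hPBr
      have hPA : PAr ≤ α := by rw [hPAr, union_null_eq μ hμN]; exact hF1
      have hF2 : α ≤ (μ {x | ENNReal.ofReal γ₀ ≤ g x}).toReal := by
        refine meas_ge_ge μ g hgm α γ₀ hα hγ₀pos fun γ hγpos hγlt => ?_
        have hγT : γ ∉ T := fun hmem => absurd (csInf_le hbdd hmem) (not_le.2 hγlt)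
        have : ¬ (μ {x | ENNReal.ofReal γ < g x}).toReal ≤ α := fun hle => hγT ⟨hγpos, hle⟩
        linarith [not_le.1 this]
      have hdisj : Disjoint A B := by
        rw [Set.disjoint_left]
        rintro x (hx | hx) hxB
        · exact absurd hxB.1 (ne_of_gt hx)
        · exact hxB.2 hx
      have hABeq : A ∪ B = {x | ENNReal.ofReal γ₀ ≤ g x} ∪ N := by
        ext x
        simp only [hAdef, hBdef, Set.mem_union, Set.mem_setOf_eq, Set.mem_diff]
        constructor
        · rintro ((hx | hx) | ⟨hx, -⟩)
          · exact Or.inl hx.le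
          · exact Or.inr hx
          · exact Or.inl hx.ge
        · rintro (hx | hx)
          · by_cases hxN : x ∈ N
            · exact Or.inl (Or.inr hxN)
            · rcases lt_or_eq_of_le hx with hlt | heq
              · exact Or.inl (Or.inl hlt)
              · exact Or.inr ⟨heq.symm, hxN⟩
          · exact Or.inl (Or.inr hx)
      have hαle : α ≤ PAr + PBr := by
        have h1 : μ (A ∪ B) = μ A + μ B := measure_union hdisj hBm
        have h2 : {x | ENNReal.ofReal γ₀ ≤ g x} ⊆ A ∪ B := by
          rw [hABeq]; exact Set.subset_union_left
        calc α ≤ (μ {x | ENNReal.ofReal γ₀ ≤ g x}).toReal := hF2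
          _ ≤ (μ (A ∪ B)).toReal := ENNReal.toReal_mono (measure_ne_top _ _) (measure_mono h2)
          _ = PAr + PBr := by
              rw [h1, ENNReal.toReal_add (measure_ne_top _ _) (measure_ne_top _ _)]
      set c : ℝ := if PBr = 0 then 0 else min 1 ((α - PAr) / PBr) with hcdef
      have hc0 : 0 ≤ c := by
        rw [hcdef]; split
        · exact le_rfl
        · exact le_min zero_le_one (div_nonneg (by linarith) ENNReal.toReal_nonneg)
      have hc1 : c ≤ 1 := by
        rw [hcdef]; split
        · exact zero_le_one
        · exact min_le_left _ _
      have hsum : PAr + c * PBr = α := by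
        by_cases hPB : PBr = 0
        · rw [hcdef, if_pos hPB, hPB]
          have : α ≤ PAr := by linarith
          linarith [le_antisymm hPA this]
        · have hPBpos : 0 < PBr := lt_of_le_of_ne ENNReal.toReal_nonneg (Ne.symm hPB)
          have hle1 : (α - PAr) / PBr ≤ 1 := (div_le_one hPBpos).2 (by linarith)
          rw [hcdef, if_neg hPB, min_eq_right hle1, div_mul_cancel₀ _ hPB]
          ring
      refine ⟨fun x => A.indicator (fun _ => (1:ℝ)) x + B.indicator (fun _ => c) x,
        (measurable_const.indicator hAm).add (measurable_const.indicator hBm),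
        fun o => add_nonneg (Set.indicator_nonneg (fun _ _ => zero_le_one) o)
          (Set.indicator_nonneg (fun _ _ => hc0) o), ?_, ?_, ?_⟩
      · intro o
        show A.indicator (fun _ => (1:ℝ)) o + B.indicator (fun _ => c) o ≤ 1
        by_cases hoA : o ∈ A
        · rw [Set.indicator_of_mem hoA, Set.indicator_of_notMem (Set.disjoint_left.1 hdisj hoA)]
          norm_num
        · rw [Set.indicator_of_notMem hoA]
          have : B.indicator (fun _ => c) o ≤ 1 :=
            le_trans (Set.indicator_le' (fun _ _ => le_rfl) (fun _ _ => hc0) o) hc1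
          linarith
      · have hint : ∫ o, (A.indicator (fun _ => (1:ℝ)) o + B.indicator (fun _ => c) o) ∂μ
            = PAr + c * PBr := by
          rw [integral_add ((integrable_const (1:ℝ)).indicator hAm)
            ((integrable_const c).indicator hBm), integral_indicator_const (1:ℝ) hAm,
            integral_indicator_const c hBm, smul_eq_mul, smul_eq_mul, mul_one, measureReal_def,
            measureReal_def, hPAr, hPBr]
          ring
        show ∫ o, (A.indicator (fun _ => (1:ℝ)) o + B.indicator (fun _ => c) o) ∂μ ≤ α
        rw [hint, hsum]
      · have hint : ∫ o, (A.indicator (fun _ => (1:ℝ)) o + B.indicator (fun _ => c) o) ∂ν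
            = (ν A).toReal + c * (ν B).toReal := by
          rw [integral_add ((integrable_const (1:ℝ)).indicator hAm)
            ((integrable_const c).indicator hBm), integral_indicator_const (1:ℝ) hAm,
            integral_indicator_const c hBm, smul_eq_mul, smul_eq_mul, mul_one, measureReal_def,
            measureReal_def]
          ring
        have hνB : (ν B).toReal = γ₀ * PBr := by
          have hsB : ν.singularPart μ B = 0 :=
            measure_mono_null (fun x hx => hx.2) hsN
          have hgB : ∫⁻ x in B, g x ∂μ = ENNReal.ofReal γ₀ * μ B := by
            rw [setLIntegral_congr_fun hBm
              (fun x hx => hx.1), setLIntegral_const]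
          rw [hνapply B hBm, hsB, zero_add, hgB, ENNReal.toReal_mul,
            ENNReal.toReal_ofReal hγ₀nonneg, hPBr]
        have hhs : hsDiv γ₀ μ ν = (ν A).toReal - γ₀ * PAr :=
          hsDiv_eq μ ν γ₀ hγ₀nonneg hN hμN hsN
        have hkey := h γ₀ hγ₀pos
        rw [hhs] at hkey
        have hγα : γ₀ * α = γ₀ * PAr + γ₀ * (c * PBr) := by rw [← hsum]; ring
        show 1 - ∫ o, (A.indicator (fun _ => (1:ℝ)) o + B.indicator (fun _ => c) o) ∂ν ≤ β
        rw [hint, hνB]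
        nlinarith [hkey, hγα]
    · -- γ₀ = 0 case
      have hγ₀0 : γ₀ = 0 := le_antisymm (not_lt.1 hγ₀pos) hγ₀nonneg
      set A0 : Set O := {x | ENNReal.ofReal γ₀ < g x} ∪ N with hA0def
      have hA0m : MeasurableSet A0 := (measurableSet_lt measurable_const hgm).union hN
      obtain ⟨hm, h0, h1, hintμ⟩ := indicator_test_props μ A0 hA0m
      obtain ⟨-, -, -, hintν⟩ := indicator_test_props ν A0 hA0m
      have hν1 : ν A0 = 1 := by
        have hcompl : ν A0ᶜ = 0 := by
          have hsub : A0ᶜ = {x | ENNReal.ofReal γ₀ < g x}ᶜ ∩ Nᶜ := by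
            rw [hA0def, Set.compl_union]
          have hsA0 : ν.singularPart μ A0ᶜ = 0 :=
            measure_mono_null (hsub ▸ Set.inter_subset_right) hsN
          have hgA0 : ∫⁻ x in A0ᶜ, g x ∂μ = 0 := by
            rw [setLIntegral_congr_fun hA0m.compl
              (fun x hx => ?_), lintegral_zero]
            have hx' : ¬ ENNReal.ofReal γ₀ < g x := fun hcon => hx (Or.inl hcon)
            have : g x ≤ ENNReal.ofReal γ₀ := not_lt.1 hx'
            rw [hγ₀0] at this
            simpa using le_zero_iff.1 (by simpa using this)
          rw [hνapply _ hA0m.compl, hsA0, hgA0, add_zero]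
        have := measure_add_measure_compl hA0m (μ := ν)
        rw [hcompl, add_zero, measure_univ] at this
        exact this
      refine ⟨A0.indicator (fun _ => (1:ℝ)), hm, h0, h1, ?_, ?_⟩
      · rw [hintμ, hA0def, union_null_eq μ hμN]
        exact hF1
      · rw [hintν, hν1]
        simpa using hβ
  · -- T empty case: necessarily α = 0
    have hTem : ∀ γ : ℝ, 0 < γ → α < (μ {x | ENNReal.ofReal γ < g x}).toReal := by
      intro γ hγ
      by_contra hcon
      exact hTne ⟨γ, hγ, not_lt.1 hcon⟩
    have hgfin : ∀ᵐ x ∂μ, g x < ⊤ := Measure.rnDeriv_lt_top ν μ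
    set s : ℕ → Set O := fun n => {x | ENNReal.ofReal n < g x} with hsdef
    have hsm : ∀ n, MeasurableSet (s n) := fun n => measurableSet_lt measurable_const hgm
    have hanti : Antitone s := by
      intro n m hnm x hx
      exact lt_of_le_of_lt (ENNReal.ofReal_le_ofReal (by exact_mod_cast hnm)) hx
    have hinter : (⋂ n, s n) ⊆ {x | ¬ g x < ⊤} := by
      intro x hx
      simp only [Set.mem_iInter, hsdef, Set.mem_setOf_eq] at hx ⊢
      intro hlt
      obtain ⟨n, hn⟩ := exists_nat_gt (g x).toReal
      exact absurd (hx n) (not_lt.2 ((ENNReal.le_ofReal_iff_toReal_le hlt.ne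
        n.cast_nonneg).2 hn.le))
    have hμinter : μ (⋂ n, s n) = 0 :=
      measure_mono_null hinter (by simpa [ae_iff] using hgfin)
    have htend : Filter.Tendsto (fun n => μ (s n)) Filter.atTop (nhds 0) := by
      have := tendsto_measure_iInter_atTop (μ := μ) (s := s)
        (fun n => (hsm n).nullMeasurableSet) hanti ⟨0, measure_ne_top _ _⟩
      rw [hμinter] at this
      exact this
    have htendR : Filter.Tendsto (fun n => (μ (s n)).toReal) Filter.atTop (nhds 0) := by
      have := (ENNReal.tendsto_toReal (by simp : (0:ℝ≥0∞) ≠ ⊤)).comp htend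
      simpa [Function.comp_def] using this
    have hα0 : α = 0 := by
      refine le_antisymm (ge_of_tendsto htendR ?_) hα
      filter_upwards [Filter.eventually_ge_atTop 1] with n hn
      exact (hTem n (by exact_mod_cast hn)).le
    -- now show 1 - β ≤ (ν N).toReal using a limit argument
    have hεtend : Filter.Tendsto (fun n => ∫⁻ x in s n, g x ∂μ) Filter.atTop (nhds 0) := by
      have hdom := tendsto_lintegral_of_dominated_convergence (μ := μ)
        (F := fun n => (s n).indicator g) (f := fun _ => 0) (bound := g)
        (fun n => hgm.indicator (hsm n))
        (fun n => Filter.Eventually.of_forall fun x => Set.indicator_le_self _ _ x)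
        (Measure.lintegral_rnDeriv_lt_top ν μ).ne ?_
      · have heq : ∀ n, ∫⁻ x, (s n).indicator g x ∂μ = ∫⁻ x in s n, g x ∂μ := fun n =>
          lintegral_indicator (hsm n) g
        simpa [heq, lintegral_zero] using hdom
      · filter_upwards [hgfin] with x hx
        obtain ⟨m, hm⟩ := exists_nat_gt (g x).toReal
        refine Filter.Tendsto.congr' ?_ tendsto_const_nhds
        rw [Filter.EventuallyEq, Filter.eventually_atTop]
        refine ⟨m, fun n hn => ?_⟩
        have hxn : x ∉ s n := by
          simp only [hsdef, Set.mem_setOf_eq, not_lt]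
          refine (ENNReal.le_ofReal_iff_toReal_le hx.ne n.cast_nonneg).2 ?_
          calc (g x).toReal ≤ m := hm.le
            _ ≤ n := by exact_mod_cast hn
        exact (Set.indicator_of_notMem hxn g).symm
    have hεtendR : Filter.Tendsto (fun n => (∫⁻ x in s n, g x ∂μ).toReal)
        Filter.atTop (nhds 0) := by
      have := (ENNReal.tendsto_toReal (by simp : (0:ℝ≥0∞) ≠ ⊤)).comp hεtend
      simpa [Function.comp_def] using this
    have hεfin : ∀ n, ∫⁻ x in s n, g x ∂μ ≠ ⊤ := fun n =>
      ne_top_of_le_ne_top (Measure.lintegral_rnDeriv_lt_top ν μ).ne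
        (setLIntegral_le_lintegral _ _)
    have hupper : ∀ n : ℕ, 1 ≤ n → 1 - β ≤ (ν N).toReal + (∫⁻ x in s n, g x ∂μ).toReal := by
      intro n hn
      have hnpos : (0:ℝ) < n := by exact_mod_cast hn
      have hkey := h n hnpos
      rw [hα0, mul_zero, zero_add] at hkey
      have hhs : hsDiv (n:ℝ) μ ν = (ν (s n ∪ N)).toReal - n * (μ (s n ∪ N)).toReal :=
        hsDiv_eq μ ν n n.cast_nonneg hN hμN hsN
      have hνsn : ν (s n ∪ N) ≤ ν N + ∫⁻ x in s n, g x ∂μ := by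
        rw [hνapply _ ((hsm n).union hN), hνN]
        have h1 : ν.singularPart μ (s n ∪ N) ≤ ν.singularPart μ N := by
          rw [← hsuniv]; exact measure_mono (Set.subset_univ _)
        have h2 : ∫⁻ x in s n ∪ N, g x ∂μ ≤ ∫⁻ x in s n, g x ∂μ := by
          refine le_trans (lintegral_union_le _ _ _) ?_
          rw [setLIntegral_measure_zero _ _ hμN, add_zero]
        exact add_le_add h1 h2
      have hνsnR : (ν (s n ∪ N)).toReal ≤ (ν N).toReal + (∫⁻ x in s n, g x ∂μ).toReal := by
        have := ENNReal.toReal_mono (by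
          exact ENNReal.add_ne_top.2 ⟨measure_ne_top _ _, hεfin n⟩) hνsn
        rwa [ENNReal.toReal_add (measure_ne_top _ _) (hεfin n)] at this
      have hmul : 0 ≤ (n:ℝ) * (μ (s n ∪ N)).toReal :=
        mul_nonneg n.cast_nonneg ENNReal.toReal_nonneg
      linarith [hkey, hhs ▸ hkey]
    have hlim : 1 - β ≤ (ν N).toReal := by
      have htend2 : Filter.Tendsto (fun n => (ν N).toReal + (∫⁻ x in s n, g x ∂μ).toReal)
          Filter.atTop (nhds ((ν N).toReal + 0)) := tendsto_const_nhds.add hεtendR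
      rw [add_zero] at htend2
      refine ge_of_tendsto htend2 ?_
      filter_upwards [Filter.eventually_ge_atTop 1] with n hn using hupper n hn
    obtain ⟨hm, h0, h1, hintμ⟩ := indicator_test_props μ N hN
    obtain ⟨-, -, -, hintν⟩ := indicator_test_props ν N hN
    refine ⟨N.indicator (fun _ => (1:ℝ)), hm, h0, h1, ?_, ?_⟩
    · rw [hintμ, hμN]
      simpa using hα
    · rw [hintν]
      linarith
end HS4

variable {O : Type*} [MeasurableSpace O]

lemma test_int_le_one (μ : Measure O) [IsProbabilityMeasure μ] (φ : O → ℝ)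
    (hφ : Measurable φ) (h0 : ∀ o, 0 ≤ φ o) (h1 : ∀ o, φ o ≤ 1) : ∫ o, φ o ∂μ ≤ 1 := by
  have hint : Integrable φ μ := by
    refine (integrable_const (1:ℝ)).mono' hφ.aestronglyMeasurable ?_
    exact Filter.Eventually.of_forall fun x => by
      rw [Real.norm_eq_abs, abs_le]; exact ⟨by linarith [h0 x], h1 x⟩
  calc ∫ o, φ o ∂μ ≤ ∫ _, (1:ℝ) ∂μ := integral_mono hint (integrable_const 1) h1
    _ = 1 := by simp

end

/-- If `(P, Q)` is a dominating pair for the mechanism `M` (with respect to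
all hockey-stick divergences `D_{e^ε}`), then for every `α ∈ [0,1]` and every pair of
neighboring datasets, `T(M(S), M(S'))(α) ≥ T(P, Q)(α)`. -/
theorem dominating_pair_tradeoff_bound
    {D : Type*} {Θ O : Type*} [MeasurableSpace Θ] [MeasurableSpace O]
    (M : D → Measure Θ) (hM : ∀ S, IsProbabilityMeasure (M S))
    (Neighbor : D → D → Prop)
    (P Q : Measure O) [IsProbabilityMeasure P] [IsProbabilityMeasure Q]
    (hDom : ∀ ε : ℝ, ∀ S S', Neighbor S S' →
      hsDiv (Real.exp ε) (M S) (M S') ≤ hsDiv (Real.exp ε) P Q)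
    (α : ℝ) (hα : α ∈ Set.Icc (0 : ℝ) 1)
    (S S' : D) (hN : Neighbor S S') :
    tradeoff (M S) (M S') α ≥ tradeoff P Q α := by
  haveI := hM S
  haveI := hM S'
  rw [ge_iff_le]
  unfold tradeoff
  refine le_csInf ⟨1, (fun _ => 0), measurable_const, fun _ => le_rfl,
    fun _ => zero_le_one, by simpa using hα.1, by simp⟩ ?_
  rintro b ⟨φ, hφm, hφ0, hφ1, hφint, rfl⟩
  have hb0 : 0 ≤ 1 - ∫ o, φ o ∂(M S') := by
    linarith [test_int_le_one (M S') φ hφm hφ0 hφ1]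
  have hkey : ∀ γ : ℝ, 0 < γ → 1 - (1 - ∫ o, φ o ∂(M S')) ≤ γ * α + hsDiv γ P Q := by
    intro γ hγ
    have h1 := easy_bound (M S) (M S') γ hγ.le φ hφm hφ0 hφ1
    have h2 : hsDiv γ (M S) (M S') ≤ hsDiv γ P Q := by
      have := hDom (Real.log γ) S S' hN
      rwa [Real.exp_log hγ] at this
    have h3 : γ * ∫ o, φ o ∂(M S) ≤ γ * α := mul_le_mul_of_nonneg_left hφint hγ.le
    linarith
  obtain ⟨ψ, hψm, hψ0, hψ1, hψμ, hψν⟩ :=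
    exists_good_test P Q α (1 - ∫ o, φ o ∂(M S')) hα.1 hb0 hkey
  refine le_trans (csInf_le ⟨0, ?_⟩ ⟨ψ, hψm, hψ0, hψ1, hψμ, rfl⟩) hψν
  rintro x ⟨ρ, hρm, hρ0, hρ1, -, rfl⟩
  linarith [test_int_le_one Q ρ hρm hρ0 hρ1]
end

section
/- For the Gaussian mechanism with sensitivity Δ₂ and noise standard deviation σ, setting μ = Δ₂/σ, the trade-off function is f(α) = Φ(Φ⁻¹(1-α) - μ), where Φ is the standard normal CDF. That is, for the hypothesis test between N(0, σ²) and N(Δ₂, σ²), the minimal FNR at FPR level α equals Φ(Φ⁻¹(1-α) - Δ₂/σ). -/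
open MeasureTheory ProbabilityTheory
open Real

/-- Standard normal CDF `Φ`. -/
noncomputable def stdNormalCDF (t : ℝ) : ℝ :=
  ((gaussianReal 0 1) (Set.Iic t)).toReal

lemma gauss_cdf (m σ : ℝ) (hσ : 0 < σ) (s : ℝ) :
    ((gaussianReal m ((σ ^ 2).toNNReal)) (Set.Iic s)) =
      (gaussianReal 0 1) (Set.Iic ((s - m) / σ)) := by
  have hvar : (⟨σ ^ 2, sq_nonneg σ⟩ : NNReal) * 1 = (σ ^ 2).toNNReal := by
    apply NNReal.coe_injective
    simp [Real.coe_toNNReal _ (sq_nonneg σ)]; rfl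
  have hmap : (gaussianReal 0 1).map (fun x => σ * x + m)
      = gaussianReal m ((σ ^ 2).toNNReal) := by
    have h1 : (gaussianReal 0 1).map (fun x => σ * x) = gaussianReal 0 ((σ ^ 2).toNNReal) := by
      have := gaussianReal_map_const_mul (μ := 0) (v := 1) σ
      rw [mul_zero] at this; convert this using 2; exact hvar.symm
    have h2 := gaussianReal_map_add_const (μ := 0) (v := (σ ^ 2).toNNReal) m
    rw [← h1] at h2
    have h3 := Measure.map_map (μ := gaussianReal 0 1) (g := fun x => x + m)
      (f := fun x => σ * x) (by fun_prop) (by fun_prop)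
    rw [h3] at h2
    simpa [Function.comp_def] using h2
  rw [← hmap, Measure.map_apply (by fun_prop) measurableSet_Iic]
  congr 1
  ext x
  simp only [Set.mem_preimage, Set.mem_Iic]
  rw [le_div_iff₀ hσ]
  constructor <;> intro h <;> nlinarith

lemma gauss_integral (m : ℝ) {v : NNReal} (hv : v ≠ 0) (φ : ℝ → ℝ) (hφ : Measurable φ) :
    ∫ x, φ x ∂(gaussianReal m v) = ∫ x, gaussianPDFReal m v x * φ x := by
  rw [gaussianReal_of_var_ne_zero _ hv]
  have hd : gaussianPDF m v = fun x => ((gaussianPDFReal m v x).toNNReal : ENNReal) := rfl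
  rw [hd, integral_withDensity_eq_integral_smul
    ((measurable_gaussianPDFReal m v).real_toNNReal) φ]
  congr 1
  funext x
  rw [NNReal.smul_def, Real.coe_toNNReal _ (gaussianPDFReal_nonneg m v x), smul_eq_mul]

lemma ratio_mono (Δ : ℝ) (hΔ : 0 < Δ) {v : NNReal} (hv : 0 < (v : ℝ)) {c x : ℝ} (hx : c ≤ x) :
    gaussianPDFReal Δ v c * gaussianPDFReal 0 v x
      ≤ gaussianPDFReal Δ v x * gaussianPDFReal 0 v c := by
  simp only [gaussianPDFReal, sub_zero]
  rw [mul_mul_mul_comm, mul_mul_mul_comm _ (rexp _)]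
  refine mul_le_mul_of_nonneg_left ?_ (by positivity)
  rw [← Real.exp_add, ← Real.exp_add, Real.exp_le_exp]
  rw [← add_div, ← add_div, div_le_div_iff_of_pos_right (by linarith)]
  nlinarith

lemma integrable_pdf_mul (m : ℝ) (v : NNReal) (ψ : ℝ → ℝ) (hψ : Measurable ψ)
    (h0 : ∀ x, 0 ≤ ψ x) (h1 : ∀ x, ψ x ≤ 1) :
    Integrable (fun x => gaussianPDFReal m v x * ψ x) := by
  refine Integrable.mono' (integrable_gaussianPDFReal m v)
    ((measurable_gaussianPDFReal m v).mul hψ).aestronglyMeasurable ?_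
  refine ae_of_all _ fun x => ?_
  rw [Real.norm_eq_abs, abs_mul, abs_of_nonneg (gaussianPDFReal_nonneg m v x),
    abs_of_nonneg (h0 x)]
  calc gaussianPDFReal m v x * ψ x ≤ gaussianPDFReal m v x * 1 :=
        mul_le_mul_of_nonneg_left (h1 x) (gaussianPDFReal_nonneg m v x)
    _ = _ := mul_one _


/-- For the Gaussian mechanism with sensitivity `Δ₂` and noise standard
deviation `σ`, setting `μ = Δ₂/σ`, the trade-off function between `N(0, σ²)` and
`N(Δ₂, σ²)` is `f(α) = Φ(Φ⁻¹(1-α) - μ)`: if `t` satisfies `Φ(t) = 1 - α` then the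
minimal FNR at FPR level `α` equals `Φ(t - Δ₂/σ)`. -/
theorem gaussian_tradeoff
    (Δ σ : ℝ) (hΔ : 0 < Δ) (hσ : 0 < σ)
    (α : ℝ) (hα : α ∈ Set.Icc (0 : ℝ) 1)
    (t : ℝ) (ht : stdNormalCDF t = 1 - α) :
    tradeoff (gaussianReal 0 ((σ ^ 2).toNNReal) : Measure ℝ)
        (gaussianReal Δ ((σ ^ 2).toNNReal) : Measure ℝ) α
      = stdNormalCDF (t - Δ / σ) := by

  set v : NNReal := (σ ^ 2).toNNReal with hvdef
  have hσ2 : (0:ℝ) < σ ^ 2 := by positivity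
  have hv : v ≠ 0 := (Real.toNNReal_pos.mpr hσ2).ne'
  have hvr : (0:ℝ) < (v:ℝ) := by
    rw [hvdef, Real.coe_toNNReal _ (sq_nonneg σ)]; exact hσ2
  set P : Measure ℝ := gaussianReal 0 v with hPdef
  set Q : Measure ℝ := gaussianReal Δ v with hQdef
  set c : ℝ := σ * t with hcdef
  set p : ℝ → ℝ := gaussianPDFReal 0 v with hpdef
  set q : ℝ → ℝ := gaussianPDFReal Δ v with hqdef
  -- CDF facts
  have hPI : (P (Set.Iic c)).toReal = 1 - α := by
    rw [hPdef, gauss_cdf 0 σ hσ c]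
    have : (c - 0) / σ = t := by rw [hcdef]; field_simp; try ring
    rw [this, ← ht]; rfl
  have hQI : (Q (Set.Iic c)).toReal = stdNormalCDF (t - Δ / σ) := by
    rw [hQdef, gauss_cdf Δ σ hσ c]
    have : (c - Δ) / σ = t - Δ / σ := by rw [hcdef]; field_simp; try ring
    rw [this]; rfl
  -- indicator test
  set χ : ℝ → ℝ := (Set.Ioi c).indicator (fun _ => (1:ℝ)) with hχdef
  have hχmeas : Measurable χ := measurable_const.indicator measurableSet_Ioi
  have hχ0 : ∀ x, 0 ≤ χ x := fun x => Set.indicator_nonneg (fun _ _ => zero_le_one) x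
  have hχ1 : ∀ x, χ x ≤ 1 := fun x => Set.indicator_le_self' (fun _ _ => zero_le_one) x
  have hIoi : ∀ (μ : Measure ℝ) [IsProbabilityMeasure μ],
      ∫ x, χ x ∂μ = 1 - (μ (Set.Iic c)).toReal := by
    intro μ _
    have h1 : ∫ x, χ x ∂μ = (μ (Set.Ioi c)).toReal := by
      rw [hχdef]
      exact integral_indicator_one measurableSet_Ioi
    have h2 : μ (Set.Ioi c) = 1 - μ (Set.Iic c) := by
      rw [← Set.compl_Iic]
      exact prob_compl_eq_one_sub measurableSet_Iic
    rw [h1, h2, ENNReal.toReal_sub_of_le prob_le_one ENNReal.one_ne_top, ENNReal.toReal_one]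
  have hχP : ∫ x, χ x ∂P = α := by rw [hIoi P, hPI]; ring
  have hχQ : ∫ x, χ x ∂Q = 1 - stdNormalCDF (t - Δ / σ) := by rw [hIoi Q, hQI]
  -- the lower bound
  have hlb : ∀ β ∈ {β | ∃ φ : ℝ → ℝ, Measurable φ ∧ (∀ o, 0 ≤ φ o) ∧ (∀ o, φ o ≤ 1) ∧
      (∫ o, φ o ∂P) ≤ α ∧ β = 1 - ∫ o, φ o ∂Q}, stdNormalCDF (t - Δ / σ) ≤ β := by
    rintro β ⟨φ, hφm, hφ0, hφ1, hφP, rfl⟩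
    set k : ℝ := q c / p c with hkdef
    have hpc : 0 < p c := gaussianPDFReal_pos 0 v c hv
    have hk : 0 ≤ k := div_nonneg (gaussianPDFReal_nonneg Δ v c) hpc.le
    -- pointwise inequality
    have hpoint : ∀ x, 0 ≤ (χ x - φ x) * (q x - k * p x) := by
      intro x
      by_cases hx : c < x
      · have hχx : χ x = 1 := Set.indicator_of_mem hx _
        have hqp : k * p x ≤ q x := by
          rw [hkdef, div_mul_eq_mul_div, div_le_iff₀ hpc]
          exact ratio_mono Δ hΔ hvr hx.le
        exact mul_nonneg (by rw [hχx]; linarith [hφ1 x]) (by linarith)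
      · push_neg at hx
        have hχx : χ x = 0 := Set.indicator_of_notMem (by simpa using hx) _
        have hqp : q x ≤ k * p x := by
          rw [hkdef, div_mul_eq_mul_div, le_div_iff₀ hpc]
          exact ratio_mono Δ hΔ hvr hx
        have h1 : χ x - φ x ≤ 0 := by rw [hχx]; linarith [hφ0 x]
        have h2 : q x - k * p x ≤ 0 := by linarith
        nlinarith
    -- integrability
    have Ipφ : Integrable (fun x => p x * φ x) := integrable_pdf_mul 0 v φ hφm hφ0 hφ1
    have Iqφ : Integrable (fun x => q x * φ x) := integrable_pdf_mul Δ v φ hφm hφ0 hφ1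
    have Ipχ : Integrable (fun x => p x * χ x) := integrable_pdf_mul 0 v χ hχmeas hχ0 hχ1
    have Iqχ : Integrable (fun x => q x * χ x) := integrable_pdf_mul Δ v χ hχmeas hχ0 hχ1
    -- integral identities
    have eφP : ∫ o, φ o ∂P = ∫ x, p x * φ x := gauss_integral 0 hv φ hφm
    have eφQ : ∫ o, φ o ∂Q = ∫ x, q x * φ x := gauss_integral Δ hv φ hφm
    have eχP : ∫ x, p x * χ x = α := by
      rw [← gauss_integral 0 hv χ hχmeas]; exact hχP
    have eχQ : ∫ x, q x * χ x = 1 - stdNormalCDF (t - Δ / σ) := by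
      rw [← gauss_integral Δ hv χ hχmeas]; exact hχQ
    -- expand the NP integral
    have h0 : 0 ≤ ∫ x, (χ x - φ x) * (q x - k * p x) := integral_nonneg hpoint
    have hexp : ∫ x, (χ x - φ x) * (q x - k * p x)
        = ((∫ x, q x * χ x) - ∫ x, q x * φ x)
          - k * ((∫ x, p x * χ x) - ∫ x, p x * φ x) := by
      have hfe : (fun x => (χ x - φ x) * (q x - k * p x))
          = fun x => (q x * χ x - q x * φ x) - k * (p x * χ x - p x * φ x) := by
        funext x; ring
      have I1 : Integrable (fun x => q x * χ x - q x * φ x) := Iqχ.sub Iqφ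
      have I2 : Integrable (fun x => k * (p x * χ x - p x * φ x)) :=
        (Ipχ.sub Ipφ).const_mul k
      rw [hfe, integral_sub I1 I2, integral_sub Iqχ Iqφ, integral_const_mul k _,
        integral_sub Ipχ Ipφ]
    rw [hexp, eχP, eχQ] at h0
    have hφP' : ∫ x, p x * φ x ≤ α := by rw [← eφP]; exact hφP
    rw [eφQ]
    nlinarith [mul_nonneg hk (sub_nonneg.mpr hφP')]
  -- membership
  have hmem : stdNormalCDF (t - Δ / σ) ∈ {β | ∃ φ : ℝ → ℝ, Measurable φ ∧ (∀ o, 0 ≤ φ o)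
      ∧ (∀ o, φ o ≤ 1) ∧ (∫ o, φ o ∂P) ≤ α ∧ β = 1 - ∫ o, φ o ∂Q} :=
    ⟨χ, hχmeas, hχ0, hχ1, le_of_eq hχP, by rw [hχQ]; ring⟩
  simp only [tradeoff]
  exact le_antisymm (csInf_le ⟨_, hlb⟩ hmem) (le_csInf ⟨_, hmem⟩ hlb)
end

section
/- For any two probability measures P and Q, the trade-off functions satisfy the inversion identity: for all α ∈ [0,1], T(Q, P)(α) = T(P, Q)⁻¹(α), where the inverse is defined as f⁻¹(α) = inf{t ∈ [0,1] : f(t) ≤ α}. -/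
open MeasureTheory

/-- The inverse of a trade-off function: `f⁻¹(α) = inf {t ∈ [0,1] : f(t) ≤ α}`. -/
noncomputable def tradeoffInv (f : ℝ → ℝ) (α : ℝ) : ℝ :=
  sInf {t | t ∈ Set.Icc (0 : ℝ) 1 ∧ f t ≤ α}

open Filter

section Aux

variable {O : Type*} [MeasurableSpace O]

lemma test_integrable (μ : Measure O) [IsFiniteMeasure μ] {φ : O → ℝ}
    (hm : Measurable φ) (h0 : ∀ o, 0 ≤ φ o) (h1 : ∀ o, φ o ≤ 1) :
    Integrable φ μ := by
  refine Integrable.mono' (integrable_const 1) hm.aestronglyMeasurable ?_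
  filter_upwards with o
  rw [Real.norm_eq_abs, abs_le]
  exact ⟨by linarith [h0 o], h1 o⟩

lemma test_integral_mem (μ : Measure O) [IsProbabilityMeasure μ] {φ : O → ℝ}
    (hm : Measurable φ) (h0 : ∀ o, 0 ≤ φ o) (h1 : ∀ o, φ o ≤ 1) :
    (∫ o, φ o ∂μ) ∈ Set.Icc (0 : ℝ) 1 := by
  refine ⟨integral_nonneg h0, ?_⟩
  calc (∫ o, φ o ∂μ) ≤ ∫ _, (1 : ℝ) ∂μ :=
        integral_mono (test_integrable μ hm h0 h1) (integrable_const 1) h1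
    _ = 1 := by simp

lemma tradeoff_bddBelow (P Q : Measure O) [IsProbabilityMeasure Q] (α : ℝ) :
    BddBelow {β | ∃ φ : O → ℝ, Measurable φ ∧ (∀ o, 0 ≤ φ o) ∧ (∀ o, φ o ≤ 1) ∧
      (∫ o, φ o ∂P) ≤ α ∧ β = 1 - ∫ o, φ o ∂Q} := by
  refine ⟨0, ?_⟩
  rintro β ⟨φ, hm, h0, h1, -, rfl⟩
  have := (test_integral_mem Q hm h0 h1).2
  linarith

lemma tradeoff_le (P Q : Measure O) [IsProbabilityMeasure Q] {α : ℝ} {φ : O → ℝ}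
    (hm : Measurable φ) (h0 : ∀ o, 0 ≤ φ o) (h1 : ∀ o, φ o ≤ 1)
    (hP : (∫ o, φ o ∂P) ≤ α) :
    tradeoff P Q α ≤ 1 - ∫ o, φ o ∂Q :=
  csInf_le (tradeoff_bddBelow P Q α) ⟨φ, hm, h0, h1, hP, rfl⟩

end Aux

/-- For any probability measures `P` and `Q`, the trade-off functions
satisfy the inversion identity `T(Q, P)(α) = T(P, Q)⁻¹(α)` for all `α ∈ [0,1]`. -/
theorem tradeoff_inversion
    {O : Type*} [MeasurableSpace O] (P Q : Measure O)
    [IsProbabilityMeasure P] [IsProbabilityMeasure Q]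
    (α : ℝ) (hα : α ∈ Set.Icc (0 : ℝ) 1) :
    tradeoff Q P α = tradeoffInv (tradeoff P Q) α := by
  obtain ⟨hα0, hα1⟩ := hα
  rw [tradeoffInv]
  -- `1` belongs to the set defining the RHS
  have h1S2 : (1 : ℝ) ∈ {t | t ∈ Set.Icc (0 : ℝ) 1 ∧ tradeoff P Q t ≤ α} := by
    refine ⟨by norm_num, ?_⟩
    have h := tradeoff_le P Q (α := 1) (φ := fun _ => (1 : ℝ)) measurable_const
      (fun _ => zero_le_one) (fun _ => le_refl 1) (by simp)
    simp only [integral_const, measure_univ, ENNReal.toReal_one, probReal_univ, smul_eq_mul, one_mul] at h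
    linarith
  refine le_antisymm ?_ ?_
  · -- tradeoff Q P α ≤ sInf S₂
    refine le_csInf ⟨1, h1S2⟩ ?_
    rintro t ⟨⟨ht0, ht1⟩, htr⟩
    -- `tradeoff P Q t ≤ α`: produce a test ψ for (Q,P) with value ≤ t
    rcases eq_or_lt_of_le hα0 with hα' | hα'
    · -- α = 0 : limit construction
      -- choose φ n with ∫ φ n ∂P ≤ t and 1 - ∫ φ n ∂Q < (1/2)^n
      have hchoice : ∀ n : ℕ, ∃ φ : O → ℝ, Measurable φ ∧ (∀ o, 0 ≤ φ o) ∧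
          (∀ o, φ o ≤ 1) ∧ (∫ o, φ o ∂P) ≤ t ∧ 1 - (∫ o, φ o ∂Q) < (1/2 : ℝ) ^ n := by
        intro n
        have hlt : tradeoff P Q t < (1/2 : ℝ) ^ n := by
          have : (0:ℝ) < (1/2 : ℝ) ^ n := by positivity
          calc tradeoff P Q t ≤ α := htr
            _ = 0 := hα'.symm
            _ < _ := this
        have hne : {β | ∃ φ : O → ℝ, Measurable φ ∧ (∀ o, 0 ≤ φ o) ∧ (∀ o, φ o ≤ 1) ∧
            (∫ o, φ o ∂P) ≤ t ∧ β = 1 - ∫ o, φ o ∂Q}.Nonempty := by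
          refine ⟨1 - ∫ o, (fun _ => (0:ℝ)) o ∂Q, fun _ => (0:ℝ), measurable_const,
            fun _ => le_refl 0, fun _ => zero_le_one, ?_, rfl⟩
          simpa using ht0
        obtain ⟨β, ⟨φ, hm, h0, h1, hP, rfl⟩, hβ⟩ := exists_lt_of_csInf_lt hne hlt
        exact ⟨φ, hm, h0, h1, hP, hβ⟩
      choose φ hφm hφ0 hφ1 hφP hφQ using hchoice
      -- ENNReal liminf
      set g : O → ENNReal := fun x => liminf (fun n => ENNReal.ofReal (φ n x)) atTop with hg
      have hgm : Measurable g := Measurable.liminf fun n => (hφm n).ennreal_ofReal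
      have hgle : ∀ x, g x ≤ 1 := by
        intro x
        calc g x ≤ liminf (fun _ : ℕ => (1 : ENNReal)) atTop :=
              liminf_le_liminf (Eventually.of_forall fun n =>
                ENNReal.ofReal_le_one.mpr (hφ1 n x))
          _ = 1 := liminf_const 1
      -- g = 1 Q-a.e.
      have hsum : ∫⁻ x, ∑' n, ENNReal.ofReal (1 - φ n x) ∂Q ≠ ⊤ := by
        rw [lintegral_tsum fun n => ((hφm n).const_sub 1).ennreal_ofReal.aemeasurable]
        have hle : ∀ n : ℕ, (∫⁻ x, ENNReal.ofReal (1 - φ n x) ∂Q) ≤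
            ENNReal.ofReal ((1/2 : ℝ) ^ n) := by
          intro n
          have hint : Integrable (fun x => 1 - φ n x) Q :=
            (integrable_const 1).sub (test_integrable Q (hφm n) (hφ0 n) (hφ1 n))
          rw [← ofReal_integral_eq_lintegral_ofReal hint
            (Eventually.of_forall fun x => by
              show (0:ℝ) ≤ 1 - φ n x; linarith [hφ1 n x])]
          apply ENNReal.ofReal_le_ofReal
          rw [integral_sub (integrable_const 1) (test_integrable Q (hφm n) (hφ0 n) (hφ1 n))]
          simp only [integral_const, measure_univ, ENNReal.toReal_one, probReal_univ, smul_eq_mul, one_mul]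
          exact (hφQ n).le
        refine ne_top_of_le_ne_top ?_ (ENNReal.tsum_le_tsum hle)
        have : ∀ n : ℕ, ENNReal.ofReal ((1/2 : ℝ) ^ n) = (ENNReal.ofReal (1/2)) ^ n := by
          intro n; rw [← ENNReal.ofReal_pow (by norm_num)]
        simp_rw [this, ENNReal.tsum_geometric]
        simp only [ne_eq, ENNReal.inv_eq_top, tsub_eq_zero_iff_le, not_le]
        exact ENNReal.ofReal_lt_one.mpr (by norm_num)
      have hae : ∀ᵐ x ∂Q, g x = 1 := by
        have hmeas : Measurable fun x => ∑' n, ENNReal.ofReal (1 - φ n x) :=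
          Measurable.ennreal_tsum fun n => ((hφm n).const_sub 1).ennreal_ofReal
        filter_upwards [ae_lt_top hmeas hsum] with x hx
        have htend : Tendsto (fun n => ENNReal.ofReal (1 - φ n x)) atTop (nhds 0) :=
          ENNReal.tendsto_atTop_zero_of_tsum_ne_top hx.ne
        have htendR : Tendsto (fun n => 1 - φ n x) atTop (nhds 0) := by
          have h' := (ENNReal.tendsto_toReal (by simp : (0:ENNReal) ≠ ⊤)).comp htend
          have heq : (ENNReal.toReal ∘ fun n => ENNReal.ofReal (1 - φ n x)) =
              fun n => 1 - φ n x := by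
            funext n
            simp [Function.comp,
              ENNReal.toReal_ofReal (by linarith [hφ1 n x] : (0:ℝ) ≤ 1 - φ n x)]
          rwa [heq, ENNReal.toReal_zero] at h'
        have htendφ : Tendsto (fun n => φ n x) atTop (nhds 1) := by
          have := htendR.const_sub 1
          simpa using this
        have : Tendsto (fun n => ENNReal.ofReal (φ n x)) atTop (nhds (ENNReal.ofReal 1)) :=
          (ENNReal.continuous_ofReal.tendsto 1).comp htendφ
        rw [hg]
        simpa using this.liminf_eq
      -- the test ψ = 1 - toReal ∘ g
      set φs : O → ℝ := fun x => (g x).toReal with hφs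
      have hφsm : Measurable φs := hgm.ennreal_toReal
      have hφs0 : ∀ x, 0 ≤ φs x := fun x => ENNReal.toReal_nonneg
      have hφs1 : ∀ x, φs x ≤ 1 := by
        intro x
        have := ENNReal.toReal_mono (by simp) (hgle x)
        simpa using this
      have hφsP : (∫ x, φs x ∂P) ≤ t := by
        rw [hφs]
        rw [integral_toReal hgm.aemeasurable
          (Eventually.of_forall fun x => lt_of_le_of_lt (hgle x) (by simp))]
        refine ENNReal.toReal_le_of_le_ofReal ht0 ?_
        calc ∫⁻ x, g x ∂P ≤ liminf (fun n => ∫⁻ x, ENNReal.ofReal (φ n x) ∂P) atTop :=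
              lintegral_liminf_le fun n => (hφm n).ennreal_ofReal
          _ ≤ liminf (fun _ : ℕ => ENNReal.ofReal t) atTop := by
              refine liminf_le_liminf (Eventually.of_forall fun n => ?_)
              rw [← ofReal_integral_eq_lintegral_ofReal
                (test_integrable P (hφm n) (hφ0 n) (hφ1 n))
                (Eventually.of_forall (hφ0 n))]
              exact ENNReal.ofReal_le_ofReal (hφP n)
          _ = ENNReal.ofReal t := liminf_const _
      have hφsQ : (∫ x, φs x ∂Q) = 1 := by
        have : ∫ x, φs x ∂Q = ∫ _, (1:ℝ) ∂Q := by
          refine integral_congr_ae ?_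
          filter_upwards [hae] with x hx
          simp [hφs, hx]
        rw [this]; simp
      -- conclude: ψ = 1 - φs is a test for tradeoff Q P α with value ≤ t
      have hψint : Integrable φs Q := test_integrable Q hφsm hφs0 hφs1
      have hψintP : Integrable φs P := test_integrable P hφsm hφs0 hφs1
      have h := tradeoff_le Q P (α := α) (φ := fun x => 1 - φs x)
        (measurable_const.sub hφsm)
        (fun x => by show (0:ℝ) ≤ 1 - φs x; linarith [hφs1 x])
        (fun x => by show 1 - φs x ≤ 1; linarith [hφs0 x]) ?_
      · rw [integral_sub (integrable_const 1) hψintP] at h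
        simp only [integral_const, measure_univ, ENNReal.toReal_one, probReal_univ, smul_eq_mul, one_mul] at h
        calc tradeoff Q P α ≤ 1 - (1 - ∫ x, φs x ∂P) := h
          _ = ∫ x, φs x ∂P := by ring
          _ ≤ t := hφsP
      · rw [integral_sub (integrable_const 1) hψint]
        simp only [integral_const, measure_univ, ENNReal.toReal_one, probReal_univ, smul_eq_mul, one_mul]
        rw [hφsQ]
        simpa using hα0
    · -- α > 0 : scaling argument, show ≤ t + ε for every ε > 0
      refine le_of_forall_pos_le_add fun ε hε => ?_
      set δ : ℝ := α * ε with hδ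
      have hδpos : 0 < δ := mul_pos hα' hε
      have hlt : tradeoff P Q t < α + δ := lt_of_le_of_lt htr (by linarith)
      have hne : {β | ∃ φ : O → ℝ, Measurable φ ∧ (∀ o, 0 ≤ φ o) ∧ (∀ o, φ o ≤ 1) ∧
          (∫ o, φ o ∂P) ≤ t ∧ β = 1 - ∫ o, φ o ∂Q}.Nonempty := by
        refine ⟨1 - ∫ o, (fun _ => (0:ℝ)) o ∂Q, fun _ => (0:ℝ), measurable_const,
          fun _ => le_refl 0, fun _ => zero_le_one, ?_, rfl⟩
        simpa using ht0
      obtain ⟨β, ⟨φ, hm, h0, h1, hP, rfl⟩, hβ⟩ := exists_lt_of_csInf_lt hne hlt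
      set c : ℝ := α / (α + δ) with hc
      have hαδ : 0 < α + δ := by linarith
      have hc0 : 0 < c := div_pos hα' hαδ
      have hc1 : c ≤ 1 := by
        rw [hc, div_le_one hαδ]; linarith
      have hintQ : Integrable φ Q := test_integrable Q hm h0 h1
      have hintP : Integrable φ P := test_integrable P hm h0 h1
      -- test ψ = c * (1 - φ)
      have h := tradeoff_le Q P (α := α) (φ := fun x => c * (1 - φ x))
        ((measurable_const.sub hm).const_mul c)
        (fun x => by
          show (0:ℝ) ≤ c * (1 - φ x); exact mul_nonneg hc0.le (by linarith [h1 x]))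
        (fun x => by
          show c * (1 - φ x) ≤ 1; nlinarith [h0 x, h1 x, hc0.le]) ?_
      · have hiP : ∫ x, c * (1 - φ x) ∂P = c * (1 - ∫ x, φ x ∂P) := by
          rw [integral_const_mul, integral_sub (integrable_const 1) hintP]
          simp
        rw [hiP] at h
        have h1t : (0:ℝ) ≤ 1 - t := by linarith
        have hPt := (test_integral_mem P hm h0 h1).1
        have hcc : 1 - c ≤ ε := by
          have h' : (1 - ε) * (α + δ) ≤ α := by nlinarith
          have h'' : 1 - ε ≤ α / (α + δ) := (le_div_iff₀ hαδ).mpr h'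
          rw [hc]; linarith
        -- 1 - c*(1 - ∫φ∂P) ≤ t + ε
        calc tradeoff Q P α ≤ 1 - c * (1 - ∫ x, φ x ∂P) := h
          _ ≤ t + ε := by nlinarith [hP, hPt, hc0.le]
      · -- ∫ c*(1-φ) ∂Q ≤ α
        have hiQ : ∫ x, c * (1 - φ x) ∂Q = c * (1 - ∫ x, φ x ∂Q) := by
          rw [integral_const_mul, integral_sub (integrable_const 1) hintQ]
          simp
        rw [hiQ]
        calc c * (1 - ∫ x, φ x ∂Q) ≤ c * (α + δ) := by nlinarith [hβ, hc0.le]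
          _ = α := by rw [hc]; field_simp
  · -- sInf S₂ ≤ tradeoff Q P α
    have hS1ne : {β | ∃ φ : O → ℝ, Measurable φ ∧ (∀ o, 0 ≤ φ o) ∧ (∀ o, φ o ≤ 1) ∧
        (∫ o, φ o ∂Q) ≤ α ∧ β = 1 - ∫ o, φ o ∂P}.Nonempty := by
      refine ⟨1 - ∫ o, (fun _ => (0:ℝ)) o ∂P, fun _ => (0:ℝ), measurable_const,
        fun _ => le_refl 0, fun _ => zero_le_one, ?_, rfl⟩
      simpa using hα0
    refine le_csInf hS1ne ?_
    rintro β ⟨ψ, hm, h0, h1, hQ, rfl⟩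
    have hPmem := test_integral_mem P hm h0 h1
    have hbdd : BddBelow {t | t ∈ Set.Icc (0 : ℝ) 1 ∧ tradeoff P Q t ≤ α} :=
      ⟨0, fun t ht => ht.1.1⟩
    refine csInf_le hbdd ⟨⟨by linarith [hPmem.2], by linarith [hPmem.1]⟩, ?_⟩
    -- tradeoff P Q (1 - ∫ψ∂P) ≤ α via the test 1 - ψ
    have hintP : Integrable ψ P := test_integrable P hm h0 h1
    have hintQ : Integrable ψ Q := test_integrable Q hm h0 h1
    have h := tradeoff_le P Q (α := 1 - ∫ o, ψ o ∂P) (φ := fun x => 1 - ψ x)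
      (measurable_const.sub hm)
      (fun x => by show (0:ℝ) ≤ 1 - ψ x; linarith [h1 x])
      (fun x => by show 1 - ψ x ≤ 1; linarith [h0 x]) ?_
    · rw [integral_sub (integrable_const 1) hintQ] at h
      simp only [integral_const, measure_univ, ENNReal.toReal_one, probReal_univ, smul_eq_mul, one_mul] at h
      linarith
    · rw [integral_sub (integrable_const 1) hintP]
      simp only [integral_const, measure_univ, ENNReal.toReal_one, probReal_univ, smul_eq_mul, one_mul]
      exact le_rfl
end
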